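/- For every natural number n ≥ 1, all zeros of the polynomial X_n(a) = 2^{2n-1}·(a+1/2)_n - binom(2n-1, n-1)·(a)_n (a degree-n polynomial in a) are real and negative. -/

import Mathlib

open Finset

/-- The Pochhammer symbol (rising factorial) `(y)_n = y (y+1) ⋯ (y+n-1)`, over `ℂ`. -/
noncomputable def pochC (y : ℂ) (n : ℕ) : ℂ := ∏ k ∈ Finset.range n, (y + k)

/-- The polynomial `X_n(z) = 2^{2n-1} (z+1/2)_n - C(2n-1, n-1) (z)_n`, viewed over `ℂ`. -/
noncomputable def XpolyC (n : ℕ) (z : ℂ) : ℂ :=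
  2 ^ (2 * n - 1) * pochC (z + 1 / 2) n - (((2 * n - 1).choose (n - 1)) : ℂ) * pochC z n

/-- Partial fraction coefficients. -/
noncomputable def cR (n k : ℕ) : ℝ :=
  (1/2) * ∏ j ∈ (Finset.range n).erase k, (((j:ℝ) + 1/2 - k) / ((j:ℝ) - k))

lemma cR_pos (n k : ℕ) : 0 < cR n k := by
  apply mul_pos one_half_pos
  apply Finset.prod_pos
  intro j hj
  have hjk : j ≠ k := Finset.ne_of_mem_erase hj
  rcases lt_or_gt_of_ne hjk with h | h
  · have h1 : (j:ℝ) + 1 ≤ k := by exact_mod_cast Nat.succ_le_of_lt h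
    exact div_pos_of_neg_of_neg (by linarith) (by linarith)
  · have h1 : (k:ℝ) + 1 ≤ j := by exact_mod_cast Nat.succ_le_of_lt h
    exact div_pos (by linarith) (by linarith)

lemma choose_lt_two_pow (n : ℕ) (hn : 1 ≤ n) :
    (2 * n - 1).choose (n - 1) < 2 ^ (2 * n - 1) := by
  set m := 2 * n - 1 with hm
  have h1 : m ≠ (n - 1) := by omega
  have h2 : n - 1 ∈ Finset.range (m + 1) := by simp; omega
  have h3 : m ∈ Finset.range (m + 1) := by simp
  calc m.choose (n - 1) < ∑ i ∈ Finset.range (m + 1), m.choose i :=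
        Finset.single_lt_sum h1 h2 h3 (by simp) (fun k _ _ => Nat.zero_le _)
    _ = 2 ^ m := Nat.sum_range_choose m

open Polynomial in
/-- Partial fraction identity. -/
lemma pf_identity (n : ℕ) (hn : 1 ≤ n) (z : ℂ) :
    ∏ j ∈ Finset.range n, (z + j + 1/2) =
      ∏ j ∈ Finset.range n, (z + j)
        + ∑ k ∈ Finset.range n, (cR n k : ℂ) * ∏ j ∈ (Finset.range n).erase k, (z + j) := by
  set P : ℂ[X] := ∏ j ∈ Finset.range n, (X + C ((j:ℂ) + 1/2)) with hPdef
  set Q : ℂ[X] := ∏ j ∈ Finset.range n, (X + C ((j:ℂ))) with hQdef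
  set R : ℂ[X] := ∑ k ∈ Finset.range n, C ((cR n k : ℂ)) *
      ∏ j ∈ (Finset.range n).erase k, (X + C ((j:ℂ))) with hRdef
  have hPm : P.Monic := monic_prod_of_monic _ _ (fun j _ => monic_X_add_C _)
  have hQm : Q.Monic := monic_prod_of_monic _ _ (fun j _ => monic_X_add_C _)
  have hPd : P.natDegree = n := by
    rw [hPdef, natDegree_prod _ _ (fun j _ => (monic_X_add_C _).ne_zero)]
    simp only [natDegree_X_add_C, Finset.sum_const, Finset.card_range, smul_eq_mul, mul_one]
  have hQd : Q.natDegree = n := by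
    rw [hQdef, natDegree_prod _ _ (fun j _ => (monic_X_add_C _).ne_zero)]
    simp only [natDegree_X_add_C, Finset.sum_const, Finset.card_range, smul_eq_mul, mul_one]
  have key : P - Q = R := by
    apply Polynomial.eq_of_degrees_lt_of_eval_index_eq (v := fun k : ℕ => -(k:ℂ)) (Finset.range n)
    · intro a _ b _ hab
      have h2 : ((a:ℕ):ℂ) = ((b:ℕ):ℂ) := neg_injective hab
      exact_mod_cast h2
    · rw [Finset.card_range]
      have h1 : (P - Q).degree < P.degree :=
        degree_sub_lt (by rw [degree_eq_natDegree hPm.ne_zero, degree_eq_natDegree hQm.ne_zero,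
          hPd, hQd]) hPm.ne_zero (by rw [hPm.leadingCoeff, hQm.leadingCoeff])
      calc (P - Q).degree < P.degree := h1
        _ = (n : WithBot ℕ) := by rw [degree_eq_natDegree hPm.ne_zero, hPd]
      -- might need cast fix
    · rw [Finset.card_range]
      apply lt_of_le_of_lt (degree_sum_le _ _)
      refine (Finset.sup_lt_iff (WithBot.bot_lt_coe n)).mpr ?_
      intro k hk
      apply lt_of_le_of_lt (degree_mul_le _ _)
      have hm : (∏ j ∈ (Finset.range n).erase k, (X + C ((j:ℂ)))).Monic :=
        monic_prod_of_monic _ _ (fun j _ => monic_X_add_C _)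
      have hd : (∏ j ∈ (Finset.range n).erase k, (X + C ((j:ℂ)))).natDegree = n - 1 := by
        rw [natDegree_prod _ _ (fun j _ => (monic_X_add_C _).ne_zero)]
        simp only [natDegree_X_add_C, Finset.sum_const, smul_eq_mul, mul_one,
          Finset.card_erase_of_mem hk, Finset.card_range]
      calc (C ((cR n k : ℝ) : ℂ)).degree
            + (∏ j ∈ (Finset.range n).erase k, (X + C ((j:ℂ)))).degree
          ≤ 0 + ((n - 1 : ℕ) : WithBot ℕ) := by
            apply add_le_add degree_C_le
            rw [degree_eq_natDegree hm.ne_zero, hd]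
        _ = ((n - 1 : ℕ) : WithBot ℕ) := zero_add _
        _ < (n : WithBot ℕ) := by exact_mod_cast Nat.sub_lt hn one_pos
    · intro k hk
      rw [eval_sub]
      have hQ0 : eval (-(k:ℂ)) Q = 0 := by
        rw [hQdef, eval_prod]
        apply Finset.prod_eq_zero hk
        simp
      have hPe : eval (-(k:ℂ)) P = ∏ j ∈ Finset.range n, (-(k:ℂ) + ((j:ℂ) + 1/2)) := by
        rw [hPdef, eval_prod]; simp
      have hRe : eval (-(k:ℂ)) R
          = (cR n k : ℂ) * ∏ j ∈ (Finset.range n).erase k, (-(k:ℂ) + (j:ℂ)) := by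
        rw [hRdef, eval_finset_sum, Finset.sum_eq_single k]
        · simp [eval_prod]
        · intro b hb hbk
          have hkb : k ∈ (Finset.range n).erase b := Finset.mem_erase.mpr ⟨Ne.symm hbk, hk⟩
          rw [eval_mul, eval_prod, Finset.prod_eq_zero hkb (by simp), mul_zero]
        · intro h; exact absurd hk h
      rw [hQ0, hPe, hRe, sub_zero]
      have hcast : ((cR n k : ℝ) : ℂ)
          = (1/2 : ℂ) * ∏ j ∈ (Finset.range n).erase k, (((j:ℂ) + 1/2 - k) / ((j:ℂ) - k)) := by
        rw [cR]; push_cast; ring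
      rw [hcast, mul_assoc, ← Finset.prod_mul_distrib]
      have hstep : ∀ j ∈ (Finset.range n).erase k,
          ((j:ℂ) + 1/2 - k) / ((j:ℂ) - k) * (-(k:ℂ) + j) = -(k:ℂ) + ((j:ℂ) + 1/2) := by
        intro j hj
        have hjk : (j:ℂ) - k ≠ 0 := by
          rw [sub_ne_zero]
          exact_mod_cast Finset.ne_of_mem_erase hj
        field_simp
        ring
      rw [Finset.prod_congr rfl hstep,
        ← Finset.mul_prod_erase _ (fun j : ℕ => -(k:ℂ) + ((j:ℂ) + 1/2)) hk]
      congr 1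
      ring
  rw [hPdef, hQdef, hRdef] at key
  have := congrArg (eval z) key
  simp only [eval_sub, eval_prod, eval_finset_sum, eval_mul, eval_add, eval_X, eval_C] at this
  have e1 : ∏ j ∈ Finset.range n, (z + ((j:ℂ) + 1/2)) = ∏ j ∈ Finset.range n, (z + j + 1/2) :=
    Finset.prod_congr rfl (fun j _ => by ring)
  rw [e1] at this
  linear_combination this

/-- All zeros of `X_n` are real and negative. -/
theorem Xpoly_zeros_real_negative (n : ℕ) (hn : 1 ≤ n) (z : ℂ) (hz : XpolyC n z = 0) :
    z.im = 0 ∧ z.re < 0 := by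
  set m := 2 * n - 1 with hm
  have hC0 : (0:ℝ) < ((m.choose (n-1) : ℕ) : ℝ) := by
    exact_mod_cast Nat.choose_pos (by omega)
  have hClt : ((m.choose (n-1) : ℕ) : ℝ) < 2 ^ m := by
    exact_mod_cast choose_lt_two_pow n hn
  have heq : (2:ℂ) ^ m * pochC (z + 1/2) n = ((m.choose (n-1) : ℕ) : ℂ) * pochC z n := by
    have h := hz
    rw [XpolyC] at h
    rw [← hm] at h
    exact sub_eq_zero.mp h
  have hzk12 : ∀ k : ℕ, (z + 1/2 + k) ≠ 0 ∨ True := fun _ => Or.inr trivial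
  -- Part 1 : negative real part
  have hre : z.re < 0 := by
    by_contra hcon
    push_neg at hcon
    have habs : ∀ k : ℕ, ‖z + k‖ ≤ ‖z + 1/2 + k‖ := by
      intro k
      rw [Complex.norm_def, Complex.norm_def]
      apply Real.sqrt_le_sqrt
      rw [Complex.normSq_apply, Complex.normSq_apply]
      have e1 : (z + 1/2 + k).re = z.re + 1/2 + k := by simp
      have e2 : (z + 1/2 + k).im = z.im := by simp
      have e3 : (z + k).re = z.re + k := by simp
      have e4 : (z + k).im = z.im := by simp
      rw [e1, e2, e3, e4]
      have hk0 : (0:ℝ) ≤ k := Nat.cast_nonneg k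
      nlinarith
    have hpos : ∀ k ∈ Finset.range n, 0 < ‖z + 1/2 + k‖ := by
      intro k _
      apply norm_pos_iff.mpr
      intro h0
      have := congrArg Complex.re h0
      simp at this
      have hk0 : (0:ℝ) ≤ k := Nat.cast_nonneg k
      norm_num at this
      linarith
    have h1 : (2:ℝ)^m * ∏ k ∈ Finset.range n, ‖z + 1/2 + k‖
        = ((m.choose (n-1):ℕ):ℝ) * ∏ k ∈ Finset.range n, ‖z + k‖ := by
      have h2 := congrArg (fun w : ℂ => ‖w‖) heq
      simpa [pochC, norm_mul, norm_pow, norm_prod, Complex.norm_two, Complex.norm_natCast] using h2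
    have h2 : ((m.choose (n-1):ℕ):ℝ) * ∏ k ∈ Finset.range n, ‖z + k‖
        < (2:ℝ)^m * ∏ k ∈ Finset.range n, ‖z + 1/2 + k‖ := by
      calc ((m.choose (n-1):ℕ):ℝ) * ∏ k ∈ Finset.range n, ‖z + k‖
          ≤ ((m.choose (n-1):ℕ):ℝ) * ∏ k ∈ Finset.range n, ‖z + 1/2 + k‖ := by
            apply mul_le_mul_of_nonneg_left _ hC0.le
            exact Finset.prod_le_prod (fun k _ => norm_nonneg _) (fun k _ => habs k)
        _ < (2:ℝ)^m * ∏ k ∈ Finset.range n, ‖z + 1/2 + k‖ :=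
            mul_lt_mul_of_pos_right hClt (Finset.prod_pos hpos)
    rw [h1] at h2
    exact lt_irrefl _ h2
  -- Part 2 : real
  have him : z.im = 0 := by
    by_contra him
    have hzk : ∀ k : ℕ, z + (k:ℂ) ≠ 0 := by
      intro k h0
      apply him
      have := congrArg Complex.im h0
      simpa using this
    have hB : pochC z n ≠ 0 := by
      rw [pochC]
      exact Finset.prod_ne_zero_iff.mpr (fun k _ => hzk k)
    have hid := pf_identity n hn z
    have hA : pochC (z + 1/2) n = ∏ j ∈ Finset.range n, (z + j + 1/2) := by
      rw [pochC]
      exact Finset.prod_congr rfl (fun j _ => by ring)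
    set W := ∑ k ∈ Finset.range n, (cR n k : ℂ) / (z + k) with hW
    have hSW : ∑ k ∈ Finset.range n, (cR n k : ℂ) * ∏ j ∈ (Finset.range n).erase k, (z + j)
        = pochC z n * W := by
      rw [hW, Finset.mul_sum]
      apply Finset.sum_congr rfl
      intro k hk
      have h0 : (z + (k:ℂ)) ≠ 0 := hzk k
      rw [pochC, ← Finset.mul_prod_erase _ _ hk]
      field_simp
    have hA2 : pochC (z + 1/2) n = pochC z n * (1 + W) := by
      rw [hA, hid, hSW, pochC]
      ring
    have h3 : ((2:ℂ)^m * (1 + W) - ((m.choose (n-1):ℕ):ℂ)) * pochC z n = 0 := by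
      rw [hA2] at heq
      linear_combination heq
    have h4 : (2:ℂ)^m * (1 + W) = ((m.choose (n-1):ℕ):ℂ) := by
      rcases mul_eq_zero.mp h3 with h | h
      · exact sub_eq_zero.mp h
      · exact absurd h hB
    have h5 : ((2:ℂ)^m * (1 + W)).im = 0 := by rw [h4]; simp
    have h2m : ((2:ℂ)^m) = (((2:ℝ)^m : ℝ) : ℂ) := by push_cast; ring
    rw [h2m, Complex.im_ofReal_mul] at h5
    have h6 : W.im = 0 := by
      have hp : (2:ℝ)^m ≠ 0 := by positivity
      have := mul_eq_zero.mp h5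
      rcases this with h | h
      · exact absurd h hp
      · simpa using h
    have hWim : W.im = -z.im * ∑ k ∈ Finset.range n, cR n k / Complex.normSq (z + k) := by
      rw [hW, Complex.im_sum, Finset.mul_sum]
      apply Finset.sum_congr rfl
      intro k hk
      rw [div_eq_mul_inv, Complex.im_ofReal_mul, Complex.inv_im]
      have e4 : (z + (k:ℂ)).im = z.im := by simp
      rw [e4]
      field_simp
    have hT : 0 < ∑ k ∈ Finset.range n, cR n k / Complex.normSq (z + k) :=
      Finset.sum_pos
        (fun k _ => div_pos (cR_pos n k) (Complex.normSq_pos.mpr (hzk k)))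
        (Finset.nonempty_range_iff.mpr (by omega))
    rw [hWim] at h6
    rcases mul_eq_zero.mp h6 with h | h
    · exact him (by linarith [neg_eq_zero.mp h])
    · exact absurd h (ne_of_gt hT)
  exact ⟨him, hre⟩
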